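/- In any maximum induced matching of the stacked-book graph G_{m,2} = S_m □ P_2 (m ≥ 3), the central vertices of the two star layers are unsaturated (neither is an endpoint of an edge in the matching). -/

import Mathlib

open SimpleGraph

/-- The star graph on `m` vertices: vertex `0` is the center, the rest are leaves. -/
def starGraph (m : ℕ) : SimpleGraph (Fin m) :=
  SimpleGraph.fromRel (fun i _ => i.val = 0)

/-- `M` is an induced matching of `G`: every element of `M` is an edge of `G`, and no two
distinct edges of `M` share an endpoint or have endpoints joined by an edge of `G`. -/
def IsInducedMatching {V : Type*} (G : SimpleGraph V) (M : Finset (Sym2 V)) : Prop :=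
  ↑M ⊆ G.edgeSet ∧
    ∀ e₁ ∈ M, ∀ e₂ ∈ M, e₁ ≠ e₂ → ∀ u ∈ e₁, ∀ v ∈ e₂, u ≠ v ∧ ¬G.Adj u v

/-- The maximum induced matching number of `G`. -/
noncomputable def im {V : Type*} (G : SimpleGraph V) : ℕ :=
  sSup {k | ∃ M : Finset (Sym2 V), IsInducedMatching G M ∧ M.card = k}

/-- The stacked-book graph `G_{m,n} = S_m □ P_n`. -/
def stackedBook (m n : ℕ) : SimpleGraph (Fin m × Fin n) :=
  starGraph m □ SimpleGraph.pathGraph n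

lemma stackedBook_adj {m : ℕ} (x y : Fin m × Fin 2) :
    (stackedBook m 2).Adj x y ↔
      ((x.1 ≠ y.1 ∧ (x.1.val = 0 ∨ y.1.val = 0)) ∧ x.2 = y.2) ∨
        (x.1 = y.1 ∧ ((x.2.val + 1 = y.2.val) ∨ (y.2.val + 1 = x.2.val))) := by
  simp [stackedBook, boxProd_adj, _root_.starGraph, fromRel_adj, pathGraph_adj, and_comm, or_comm]

/-- Non-neighbors of the center (other than the center itself) are leaves of the other layer. -/
lemma nonnbr {m : ℕ} (j : Fin 2) (v : Fin m × Fin 2) (hm : 3 ≤ m)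
    (h1 : v ≠ (⟨0, by omega⟩, j)) (h2 : ¬ (stackedBook m 2).Adj (⟨0, by omega⟩, j) v) :
    v.1.val ≠ 0 ∧ v.2 ≠ j := by
  obtain ⟨v1, v2⟩ := v
  rw [stackedBook_adj] at h2
  push_neg at h2
  simp only at h2 ⊢
  by_cases hv1 : v1.val = 0
  · exfalso
    have hv1' : v1 = ⟨0, by omega⟩ := Fin.ext hv1
    have hv2 : v2 ≠ j := fun h => h1 (by rw [Prod.ext_iff]; exact ⟨hv1', h⟩)
    have h3 := h2.2 hv1'.symm
    have h4 : v2.val ≠ j.val := fun h => hv2 (Fin.ext h)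
    have := j.isLt
    have := v2.isLt
    omega
  · refine ⟨hv1, fun hv2 => ?_⟩
    have := h2.1 ⟨fun h => hv1 (by rw [← h]), Or.inl trivial⟩
    exact this hv2.symm

lemma center_forces {m : ℕ} (hm : 3 ≤ m) (M : Finset (Sym2 (Fin m × Fin 2)))
    (hM : IsInducedMatching (stackedBook m 2) M) (j : Fin 2) (e : Sym2 (Fin m × Fin 2))
    (he : e ∈ M) (hc : (⟨0, by omega⟩, j) ∈ e) : ∀ e' ∈ M, e' = e := by
  intro e' he'
  by_contra hne
  induction e' using Sym2.ind with
  | _ x y =>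
    have hadj : (stackedBook m 2).Adj x y := hM.1 he'
    have hx := hM.2 e he _ he' (fun h => hne h.symm) _ hc x (Sym2.mem_mk_left x y)
    have hy := hM.2 e he _ he' (fun h => hne h.symm) _ hc y (Sym2.mem_mk_right x y)
    have hx' := nonnbr j x hm (fun h => hx.1 h.symm) hx.2
    have hy' := nonnbr j y hm (fun h => hy.1 h.symm) hy.2
    rw [stackedBook_adj] at hadj
    have hj := j.isLt
    have hx2 := x.2.isLt
    have hy2 := y.2.isLt
    have hx2j : x.2.val ≠ j.val := fun h => hx'.2 (Fin.ext h)
    have hy2j : y.2.val ≠ j.val := fun h => hy'.2 (Fin.ext h)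
    rcases hadj with ⟨⟨_, h0⟩, _⟩ | ⟨_, h⟩
    · rcases h0 with h0 | h0
      · exact hx'.1 h0
      · exact hy'.1 h0
    · omega

lemma two_le_im {m : ℕ} (hm : 3 ≤ m) : 2 ≤ im (stackedBook m 2) := by
  set a : Fin m := ⟨1, by omega⟩
  set b : Fin m := ⟨2, by omega⟩
  set e₁ : Sym2 (Fin m × Fin 2) := s((a, 0), (a, 1))
  set e₂ : Sym2 (Fin m × Fin 2) := s((b, 0), (b, 1))
  have hab : a ≠ b := by simp [a, b, Fin.ext_iff]
  have hadj : ∀ c : Fin m, (stackedBook m 2).Adj (c, 0) (c, 1) := by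
    intro c
    rw [stackedBook_adj]
    right
    exact ⟨rfl, by simp⟩
  have hind : IsInducedMatching (stackedBook m 2) {e₁, e₂} := by
    constructor
    · intro e hee
      simp only [Finset.coe_insert, Finset.coe_singleton, Set.mem_insert_iff,
        Set.mem_singleton_iff] at hee
      rcases hee with rfl | rfl
      · exact hadj a
      · exact hadj b
    · intro f₁ hf₁ f₂ hf₂ hne u hu v hv
      simp only [Finset.mem_insert, Finset.mem_singleton] at hf₁ hf₂
      have key : ∀ (c d : Fin m) (i k : Fin 2), c ≠ d → c.val ≠ 0 → d.val ≠ 0 →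
          (c, i) ≠ (d, k) ∧ ¬(stackedBook m 2).Adj (c, i) (d, k) := by
        intro c d i k hcd hc hd
        constructor
        · exact fun h => hcd (congrArg Prod.fst h)
        · rw [stackedBook_adj]
          push_neg
          refine ⟨fun h => ?_, fun h => absurd h hcd⟩
          exfalso
          rcases h.2 with h' | h' <;> [exact hc h'; exact hd h']
      have ha0 : a.val ≠ 0 := by simp [a]
      have hb0 : b.val ≠ 0 := by simp [b]
      have hne' : f₁ ≠ f₂ → (f₁ = e₁ ∧ f₂ = e₂) ∨ (f₁ = e₂ ∧ f₂ = e₁) := by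
        rcases hf₁ with rfl | rfl <;> rcases hf₂ with rfl | rfl <;> tauto
      rcases hne' hne with ⟨rfl, rfl⟩ | ⟨rfl, rfl⟩ <;>
        rcases Sym2.mem_iff.1 hu with rfl | rfl <;> rcases Sym2.mem_iff.1 hv with rfl | rfl <;>
          [exact key a b 0 0 hab ha0 hb0; exact key a b 0 1 hab ha0 hb0;
           exact key a b 1 0 hab ha0 hb0; exact key a b 1 1 hab ha0 hb0;
           exact key b a 0 0 hab.symm hb0 ha0; exact key b a 0 1 hab.symm hb0 ha0;
           exact key b a 1 0 hab.symm hb0 ha0; exact key b a 1 1 hab.symm hb0 ha0]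
  have hcard : ({e₁, e₂} : Finset (Sym2 (Fin m × Fin 2))).card = 2 := by
    rw [Finset.card_insert_of_notMem, Finset.card_singleton]
    simp only [Finset.mem_singleton]
    intro h
    rw [Sym2.eq_iff] at h
    rcases h with ⟨h, _⟩ | ⟨h, _⟩ <;> exact hab (congrArg Prod.fst h)
  apply le_csSup
  · refine ⟨Fintype.card (Sym2 (Fin m × Fin 2)), ?_⟩
    rintro k ⟨N, _, rfl⟩
    exact Finset.card_le_univ N
  · exact ⟨{e₁, e₂}, hind, hcard⟩

theorem centers_unsaturated_stackedBook_two (m : ℕ) (hm : 3 ≤ m)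
    (M : Finset (Sym2 (Fin m × Fin 2))) (hM : IsInducedMatching (stackedBook m 2) M)
    (hmax : M.card = im (stackedBook m 2)) :
    ∀ j : Fin 2, ∀ e ∈ M, (⟨0, by omega⟩, j) ∉ e := by
  intro j e he hc
  have hsingle := center_forces hm M hM j e he hc
  have hMeq : M = {e} := by
    apply Finset.eq_singleton_iff_unique_mem.2
    exact ⟨he, hsingle⟩
  have h2 := two_le_im hm
  rw [← hmax, hMeq, Finset.card_singleton] at h2
  omega
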